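/- For every real number ε with 0 < ε < 1, the series ∑_{n≥1} n^{−n}·( ∑_{1 ≤ j ≤ (1−1/e−ε)n} a(n,j) + ∑_{(1−1/e+ε)n ≤ j ≤ n} a(n,j) ) converges (is finite). -/

import Mathlib

noncomputable def stirling2 (n j : ℕ) : ℝ :=
  (1 / (Nat.factorial j : ℝ)) *
    ∑ i ∈ Finset.range (j + 1), (-1 : ℝ) ^ i * (Nat.choose j i : ℝ) * ((j - i : ℕ) : ℝ) ^ n

noncomputable def a (n j : ℕ) : ℝ :=
  (Nat.choose n j : ℝ) * (Nat.factorial j : ℝ) * stirling2 n j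

open Finset

namespace Stmt3Aux

def Dm {n k : ℕ} (f : Fin k → Fin n) : ℕ := (Finset.image f Finset.univ).card

lemma Dm_le_n {n k : ℕ} (f : Fin k → Fin n) : Dm f ≤ n := by
  classical
  calc (Finset.image f Finset.univ).card ≤ (Finset.univ : Finset (Fin n)).card :=
        Finset.card_le_card (Finset.subset_univ _)
    _ = n := by simp

lemma image_cons {n k : ℕ} (v : Fin n) (g : Fin k → Fin n) :
    Finset.image (Fin.cons v g : Fin (k+1) → Fin n) Finset.univ
      = insert v (Finset.image g Finset.univ) := by
  ext x
  simp [Fin.exists_fin_succ, eq_comm]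

lemma Dm_cons {n k : ℕ} (v : Fin n) (g : Fin k → Fin n) :
    Dm (Fin.cons v g : Fin (k+1) → Fin n)
      = Dm g + (if v ∈ Finset.image g Finset.univ then 0 else 1) := by
  unfold Dm
  rw [image_cons]
  by_cases h : v ∈ Finset.image g Finset.univ
  · simp [h, Finset.insert_eq_self.2 h]
  · simp [h, Finset.card_insert_of_notMem h]

lemma sum_cons {n k : ℕ} (F : (Fin (k+1) → Fin n) → ℝ) :
    ∑ f : Fin (k+1) → Fin n, F f = ∑ g : Fin k → Fin n, ∑ v : Fin n, F (Fin.cons v g) := by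
  rw [← (Fintype.sum_equiv (Fin.consEquiv (fun _ => Fin n)) (fun p => F (Fin.cons p.1 p.2)) F
      (fun p => rfl)), Fintype.sum_prod_type]
  exact Finset.sum_comm

/-- inner sum over the new ball's value -/
lemma sum_val {n : ℕ} (s : Finset (Fin n)) (x y : ℝ) :
    ∑ v : Fin n, (if v ∈ s then x else y) = s.card * x + ((n : ℝ) - s.card) * y := by
  classical
  rw [Finset.sum_ite]
  simp only [Finset.sum_const, Finset.filter_mem_eq_inter, Finset.univ_inter]
  have h1 : Finset.univ.filter (fun v => v ∉ s) = sᶜ := by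
    ext v; simp
  rw [h1, Finset.card_compl]
  have hs : s.card ≤ n := by
    calc s.card ≤ (Finset.univ : Finset (Fin n)).card := Finset.card_le_card (Finset.subset_univ _)
      _ = n := by simp
  simp only [nsmul_eq_mul, Fintype.card_fin]
  rw [Nat.cast_sub hs]

def cnt (n k j : ℕ) : ℕ := (Finset.univ.filter (fun f : Fin k → Fin n => Dm f = j)).card

noncomputable def sur (k j : ℕ) : ℝ :=
  ∑ i ∈ Finset.range (j + 1), (-1 : ℝ) ^ i * (Nat.choose j i : ℝ) * ((j - i : ℕ) : ℝ) ^ k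

/-- cast of cnt as a sum of indicators, decomposed by the last ball -/
lemma cnt_succ (n k j : ℕ) :
    (cnt n (k+1) j : ℝ)
      = ∑ g : Fin k → Fin n,
          ((Dm g : ℝ) * (if Dm g = j then 1 else 0)
            + ((n : ℝ) - Dm g) * (if Dm g + 1 = j then 1 else 0)) := by
  classical
  have h0 : (cnt n (k+1) j : ℝ)
      = ∑ f : Fin (k+1) → Fin n, (if Dm f = j then (1:ℝ) else 0) := by
    rw [cnt, Finset.card_filter]
    push_cast
    rfl
  rw [h0, sum_cons]
  refine Finset.sum_congr rfl (fun g _ => ?_)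
  have h1 : ∀ v : Fin n, (if Dm (Fin.cons v g : Fin (k+1) → Fin n) = j then (1:ℝ) else 0)
      = (if v ∈ Finset.image g Finset.univ then (if Dm g = j then (1:ℝ) else 0)
          else (if Dm g + 1 = j then (1:ℝ) else 0)) := by
    intro v
    rw [Dm_cons]
    by_cases h : v ∈ Finset.image g Finset.univ <;> simp [h]
  rw [Finset.sum_congr rfl (fun v _ => h1 v), sum_val]
  rfl

lemma cnt_zero_succ (n k : ℕ) : cnt n (k+1) 0 = 0 := by
  classical
  rw [cnt, Finset.card_eq_zero]
  ext f
  simp only [Finset.mem_filter, Finset.mem_univ, true_and, Finset.notMem_empty, iff_false]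
  intro h
  have : (Finset.image f Finset.univ).Nonempty := ⟨f 0, Finset.mem_image_of_mem f (Finset.mem_univ 0)⟩
  rw [Dm] at h
  exact absurd (Finset.card_eq_zero.1 h) (Finset.nonempty_iff_ne_empty.1 this)

lemma cnt_rec (n k m : ℕ) :
    (cnt n (k+1) (m+1) : ℝ)
      = (m+1 : ℝ) * cnt n k (m+1) + ((n : ℝ) - m) * cnt n k m := by
  classical
  rw [cnt_succ]
  have hc : ∀ j : ℕ, (cnt n k j : ℝ) = ∑ g : Fin k → Fin n, (if Dm g = j then (1:ℝ) else 0) := by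
    intro j
    rw [cnt, Finset.card_filter]
    push_cast
    rfl
  rw [hc, hc, Finset.mul_sum, Finset.mul_sum, ← Finset.sum_add_distrib]
  refine Finset.sum_congr rfl (fun g _ => ?_)
  by_cases h1 : Dm g = m + 1
  · by_cases h2 : Dm g = m <;> simp [h1, h2] <;> omega
  · by_cases h2 : Dm g = m
    · simp [h1, h2]
    · have : ¬ (Dm g + 1 = m + 1) := by omega
      simp [h1, h2, this]

lemma sur_zero (k : ℕ) : sur (k+1) 0 = 0 := by
  simp [sur]

lemma sur_base (j : ℕ) : sur 0 j = if j = 0 then 1 else 0 := by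
  rw [sur]
  have h : ∀ i ∈ Finset.range (j+1), (-1:ℝ)^i * (Nat.choose j i : ℝ) * ((j - i : ℕ) : ℝ)^0
      = (-1:ℝ)^i * (Nat.choose j i : ℝ) := by
    intro i _; rw [pow_zero, mul_one]
  rw [Finset.sum_congr rfl h]
  have := Int.alternating_sum_range_choose (n := j)
  have hcast : ((∑ i ∈ Finset.range (j+1), (-1:ℤ)^i * (Nat.choose j i : ℤ) : ℤ) : ℝ)
      = ∑ i ∈ Finset.range (j+1), (-1:ℝ)^i * (Nat.choose j i : ℝ) := by
    push_cast
    rfl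
  rw [← hcast, this]
  split <;> simp_all

lemma sur_rec (k m : ℕ) :
    sur (k+1) (m+1) = (m+1 : ℝ) * (sur k (m+1) + sur k m) := by
  have hsplit : ∀ i ∈ Finset.range (m+2),
      (-1:ℝ)^i * (Nat.choose (m+1) i : ℝ) * (((m+1) - i : ℕ) : ℝ)^(k+1)
        = (m+1 : ℝ) * ((-1:ℝ)^i * (Nat.choose (m+1) i : ℝ) * (((m+1) - i : ℕ) : ℝ)^k)
          - (i : ℝ) * ((-1:ℝ)^i * (Nat.choose (m+1) i : ℝ) * (((m+1) - i : ℕ) : ℝ)^k) := by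
    intro i hi
    have hi' : i ≤ m + 1 := by
      have := Finset.mem_range.1 hi; omega
    have hc : (((m+1) - i : ℕ) : ℝ) = (m+1 : ℝ) - i := by
      rw [Nat.cast_sub hi']; push_cast; ring
    rw [pow_succ]
    rw [hc]
    ring
  rw [sur, Finset.sum_congr rfl hsplit, Finset.sum_sub_distrib]
  have h1 : ∑ i ∈ Finset.range (m+2),
      (m+1 : ℝ) * ((-1:ℝ)^i * (Nat.choose (m+1) i : ℝ) * (((m+1) - i : ℕ) : ℝ)^k)
      = (m+1 : ℝ) * sur k (m+1) := by
    rw [sur, Finset.mul_sum]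
  -- second sum: i * C(m+1,i) = (m+1) * C(m, i-1)
  have h2 : ∑ i ∈ Finset.range (m+2),
      (i : ℝ) * ((-1:ℝ)^i * (Nat.choose (m+1) i : ℝ) * (((m+1) - i : ℕ) : ℝ)^k)
      = -((m+1 : ℝ) * sur k m) := by
    rw [Finset.sum_range_succ']
    simp only [Nat.cast_zero, zero_mul, add_zero]
    have hterm : ∀ i : ℕ, ((i+1 : ℕ) : ℝ) * ((-1:ℝ)^(i+1) * (Nat.choose (m+1) (i+1) : ℝ)
          * (((m+1) - (i+1) : ℕ) : ℝ)^k)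
        = -((m+1:ℝ) * ((-1:ℝ)^i * (Nat.choose m i : ℝ) * ((m - i : ℕ) : ℝ)^k)) := by
      intro i
      have hcc : ((i+1) : ℝ) * (Nat.choose (m+1) (i+1) : ℝ) = (m+1 : ℝ) * (Nat.choose m i : ℝ) := by
        have := Nat.add_one_mul_choose_eq m i
        -- (m+1) * choose m i = choose (m+1) (i+1) * (i+1)
        have hcast : ((Nat.succ m * Nat.choose m i : ℕ) : ℝ)
            = ((Nat.choose (Nat.succ m) (Nat.succ i) * Nat.succ i : ℕ) : ℝ) := by rw [this]
        push_cast at hcast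
        push_cast
        linarith
      have hsub : ((m+1) - (i+1) : ℕ) = (m - i : ℕ) := by omega
      rw [hsub, pow_succ]
      push_cast
      push_cast at hcc
      have key : (↑i + 1) * ((-1:ℝ)^i * -1 * ((m + 1).choose (i + 1) : ℝ) * ((m - i : ℕ) : ℝ)^k)
          = -((-1:ℝ)^i * ((m - i : ℕ) : ℝ)^k) * ((↑i + 1) * ((m + 1).choose (i + 1) : ℝ)) := by
        ring
      rw [key, hcc]
      push_cast
      ring
    rw [Finset.sum_congr rfl (fun i _ => hterm i)]
    rw [Finset.sum_neg_distrib]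
    rw [sur, Finset.mul_sum]
  rw [h1, h2]
  ring

lemma cnt_base (n j : ℕ) : (cnt n 0 j : ℝ) = if j = 0 then 1 else 0 := by
  classical
  rw [cnt]
  have hD : ∀ f : Fin 0 → Fin n, Dm f = 0 := by
    intro f
    rw [Dm]
    simp
  by_cases h : j = 0
  · subst h
    have : (Finset.univ.filter (fun f : Fin 0 → Fin n => Dm f = 0)) = Finset.univ := by
      ext f; simp [hD f]
    rw [this]
    simp
  · have : (Finset.univ.filter (fun f : Fin 0 → Fin n => Dm f = j)) = ∅ := by
      ext f; simp [hD f, Ne.symm h, h]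
    rw [this]
    simp [h]

lemma choose_id (n m : ℕ) :
    ((n:ℝ) - m) * (Nat.choose n m : ℝ) = (m+1 : ℝ) * (Nat.choose n (m+1) : ℝ) := by
  rcases le_or_gt m n with h | h
  · have := Nat.choose_succ_right_eq n m
    have hcast : ((Nat.choose n (m+1) * (m+1) : ℕ) : ℝ) = ((Nat.choose n m * (n - m) : ℕ) : ℝ) := by
      rw [this]
    push_cast [Nat.cast_sub h] at hcast
    linarith
  · have h1 : Nat.choose n m = 0 := Nat.choose_eq_zero_of_lt h
    have h2 : Nat.choose n (m+1) = 0 := Nat.choose_eq_zero_of_lt (by omega)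
    simp [h1, h2]

lemma cnt_eq (n : ℕ) : ∀ k j, (cnt n k j : ℝ) = (Nat.choose n j : ℝ) * sur k j := by
  intro k
  induction k with
  | zero =>
    intro j
    rw [cnt_base, sur_base]
    by_cases h : j = 0 <;> simp [h]
  | succ k ih =>
    intro j
    cases j with
    | zero =>
      rw [cnt_zero_succ, sur_zero]
      simp
    | succ m =>
      rw [cnt_rec, sur_rec, ih, ih]
      have := choose_id n m
      push_cast
      push_cast at this
      linear_combination (sur k m) * this

noncomputable def S (n k : ℕ) (t : ℝ) : ℝ := ∑ f : Fin k → Fin n, Real.exp (t * Dm f)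

noncomputable def T (n k : ℕ) : ℝ := ∑ f : Fin k → Fin n, (Dm f : ℝ)

lemma T_closed (n : ℕ) : ∀ k, T n k = (n:ℝ)^(k+1) - (n:ℝ) * ((n:ℝ)-1)^k := by
  intro k
  induction k with
  | zero =>
    rw [T]
    have hD : ∀ f : Fin 0 → Fin n, Dm f = 0 := by intro f; rw [Dm]; simp
    simp [hD]
  | succ k ih =>
    rw [T, sum_cons]
    have hterm : ∀ g : Fin k → Fin n, ∑ v : Fin n, ((Dm (Fin.cons v g : Fin (k+1) → Fin n) : ℕ) : ℝ)
        = (n : ℝ) * Dm g + ((n:ℝ) - Dm g) := by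
      intro g
      have h1 : ∀ v : Fin n, ((Dm (Fin.cons v g : Fin (k+1) → Fin n) : ℕ) : ℝ)
          = (if v ∈ Finset.image g Finset.univ then ((Dm g : ℕ) : ℝ) else ((Dm g : ℕ) : ℝ) + 1) := by
        intro v
        rw [Dm_cons]
        by_cases h : v ∈ Finset.image g Finset.univ <;> simp [h]
      rw [Finset.sum_congr rfl (fun v _ => h1 v), sum_val]
      have hle : (Finset.image g Finset.univ).card = Dm g := rfl
      rw [hle]
      ring
    rw [Finset.sum_congr rfl (fun g _ => hterm g)]
    have hT : ∑ g : Fin k → Fin n, ((Dm g : ℕ) : ℝ) = T n k := rfl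
    have hstep : ∑ g : Fin k → Fin n, ((n:ℝ) * Dm g + ((n:ℝ) - Dm g))
        = (n:ℝ) * T n k + ((n:ℝ)^k * (n:ℝ) - T n k) := by
      rw [Finset.sum_add_distrib, Finset.sum_sub_distrib, ← Finset.mul_sum, hT]
      have hcard : ∑ _g : Fin k → Fin n, (n:ℝ) = (n:ℝ)^k * (n:ℝ) := by
        rw [Finset.sum_const, nsmul_eq_mul, Finset.card_univ, Fintype.card_fun, Fintype.card_fin, Fintype.card_fin]
        push_cast
        ring
      rw [hcard]
    rw [hstep, ih]
    ring

lemma S_nonneg (n k : ℕ) (t : ℝ) : 0 ≤ S n k t :=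
  Finset.sum_nonneg (fun f _ => (Real.exp_pos _).le)

lemma S_succ (n k : ℕ) (t : ℝ) :
    S n (k+1) t = ∑ g : Fin k → Fin n,
      Real.exp (t * Dm g) * ((Dm g : ℝ) + ((n:ℝ) - Dm g) * Real.exp t) := by
  rw [S, sum_cons]
  refine Finset.sum_congr rfl (fun g _ => ?_)
  have h1 : ∀ v : Fin n, Real.exp (t * Dm (Fin.cons v g : Fin (k+1) → Fin n))
      = (if v ∈ Finset.image g Finset.univ then Real.exp (t * Dm g)
          else Real.exp (t * Dm g) * Real.exp t) := by
    intro v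
    rw [Dm_cons]
    by_cases h : v ∈ Finset.image g Finset.univ
    · simp [h]
    · simp only [h, if_false]
      rw [← Real.exp_add]
      push_cast
      ring_nf
  rw [Finset.sum_congr rfl (fun v _ => h1 v), sum_val]
  have hle : (Finset.image g Finset.univ).card = Dm g := rfl
  rw [hle]
  ring

lemma chebyshev_step (n k : ℕ) (t : ℝ) :
    (n:ℝ)^k * S n (k+1) t ≤ S n k t * ((n:ℝ)^(k+1) + (Real.exp t - 1) * (n:ℝ) * ((n:ℝ)-1)^k) := by
  classical
  set F : (Fin k → Fin n) → ℝ := fun g => Real.exp (t * Dm g) with hF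
  set G : (Fin k → Fin n) → ℝ := fun g => (Dm g : ℝ) + ((n:ℝ) - Dm g) * Real.exp t with hG
  have hanti : Antivary F G := by
    intro i j hij
    -- G i < G j means (1 - e^t) * (Dm i - Dm j) < 0
    have h1 : ((Dm i : ℝ) - Dm j) * (1 - Real.exp t) < 0 := by
      have : G i = (Dm i : ℝ) * (1 - Real.exp t) + (n:ℝ) * Real.exp t := by rw [hG]; ring
      have h2 : G j = (Dm j : ℝ) * (1 - Real.exp t) + (n:ℝ) * Real.exp t := by rw [hG]; ring
      rw [this, h2] at hij
      nlinarith [hij]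
    rcases lt_trichotomy t 0 with ht | ht | ht
    · -- t < 0 : 1 - e^t > 0, so Dm i < Dm j ; F decreasing
      have he : 1 - Real.exp t > 0 := by
        have := Real.exp_lt_one_iff.2 ht
        linarith
      have hd : (Dm i : ℝ) < Dm j := by nlinarith
      rw [hF]
      simp only
      apply Real.exp_le_exp.2
      nlinarith
    · subst ht
      exfalso
      rw [hG] at hij
      simp only [Real.exp_zero, mul_one] at hij
      linarith
    · have he : 1 - Real.exp t < 0 := by
        have := Real.one_lt_exp_iff.2 ht
        linarith
      have hd : (Dm j : ℝ) < Dm i := by nlinarith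
      rw [hF]
      simp only
      apply Real.exp_le_exp.2
      nlinarith
  have hcheb := hanti.card_mul_sum_le_sum_mul_sum
  have hcard : ((Fintype.card (Fin k → Fin n)) : ℝ) = (n:ℝ)^k := by
    simp [Fintype.card_fun]
  have hSG : ∑ g : Fin k → Fin n, G g = (n:ℝ)^(k+1) + (Real.exp t - 1) * (n:ℝ) * ((n:ℝ)-1)^k := by
    have hG2 : ∀ g : Fin k → Fin n, G g = (1 - Real.exp t) * (Dm g : ℝ) + (n:ℝ) * Real.exp t := by
      intro g; rw [hG]; ring
    rw [Finset.sum_congr rfl (fun g _ => hG2 g), Finset.sum_add_distrib, ← Finset.mul_sum]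
    have hc : ∑ _g : Fin k → Fin n, (n:ℝ) * Real.exp t = (n:ℝ)^k * ((n:ℝ) * Real.exp t) := by
      rw [Finset.sum_const, nsmul_eq_mul, Finset.card_univ, Fintype.card_fun, Fintype.card_fin, Fintype.card_fin]
      push_cast
      ring
    rw [hc]
    have hT : ∑ g : Fin k → Fin n, ((Dm g : ℕ) : ℝ) = T n k := rfl
    rw [hT, T_closed]
    ring
  have hFG : ∑ g : Fin k → Fin n, F g * G g = S n (k+1) t := by
    rw [S_succ]
  rw [hcard, hFG, hSG] at hcheb
  have hSF : ∑ g : Fin k → Fin n, F g = S n k t := rfl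
  rw [hSF] at hcheb
  exact hcheb

lemma S_le (n : ℕ) (hn : 1 ≤ n) (t : ℝ) :
    ∀ k, S n k t ≤ (n:ℝ)^k * Real.exp ((Real.exp t - 1) * ∑ i ∈ Finset.range k, (((n:ℝ)-1)/n)^i) := by
  have hn0 : (0:ℝ) < n := by exact_mod_cast hn
  have hq0 : (0:ℝ) ≤ ((n:ℝ)-1)/n := by
    apply div_nonneg _ hn0.le
    have : (1:ℝ) ≤ n := by exact_mod_cast hn
    linarith
  have hq1 : ((n:ℝ)-1)/n ≤ 1 := by
    rw [div_le_one hn0]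
    linarith
  intro k
  induction k with
  | zero =>
    have : S n 0 t = 1 := by
      rw [S]
      have hD : ∀ f : Fin 0 → Fin n, Dm f = 0 := by intro f; rw [Dm]; simp
      simp [hD]
    rw [this]
    simp
  | succ k ih =>
    have hq := hq0
    set q : ℝ := ((n:ℝ)-1)/n with hqdef
    have hqk0 : (0:ℝ) ≤ q^k := pow_nonneg hq0 k
    have hqk1 : q^k ≤ 1 := pow_le_one₀ hq0 hq1
    -- multiplier positivity and exp bound
    have hmul_pos : (0:ℝ) < 1 + (Real.exp t - 1) * q^k := by
      rcases le_or_gt 1 (Real.exp t) with h | h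
      · nlinarith
      · nlinarith [Real.exp_pos t]
    have hmul_exp : 1 + (Real.exp t - 1) * q^k ≤ Real.exp ((Real.exp t - 1) * q^k) := by
      linarith [Real.add_one_le_exp ((Real.exp t - 1) * q^k)]
    have hcheb := chebyshev_step n k t
    -- rewrite (n-1)^k = q^k * n^k
    have hnk : ((n:ℝ)-1)^k = q^k * (n:ℝ)^k := by
      rw [hqdef, div_pow, div_mul_cancel₀]
      exact pow_ne_zero _ hn0.ne'
    have hnkpos : (0:ℝ) < (n:ℝ)^k := pow_pos hn0 k
    have key : S n (k+1) t ≤ S n k t * ((n:ℝ) * (1 + (Real.exp t - 1) * q^k)) := by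
      rw [← mul_le_mul_iff_right₀ hnkpos]
      calc (n:ℝ)^k * S n (k+1) t
          ≤ S n k t * ((n:ℝ)^(k+1) + (Real.exp t - 1) * (n:ℝ) * ((n:ℝ)-1)^k) := hcheb
        _ = (n:ℝ)^k * (S n k t * ((n:ℝ) * (1 + (Real.exp t - 1) * q^k))) := by
            rw [hnk]; ring
    calc S n (k+1) t ≤ S n k t * ((n:ℝ) * (1 + (Real.exp t - 1) * q^k)) := key
      _ ≤ ((n:ℝ)^k * Real.exp ((Real.exp t - 1) * ∑ i ∈ Finset.range k, q^i))
            * ((n:ℝ) * (1 + (Real.exp t - 1) * q^k)) := by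
          apply mul_le_mul_of_nonneg_right ih
          positivity
      _ ≤ ((n:ℝ)^k * Real.exp ((Real.exp t - 1) * ∑ i ∈ Finset.range k, q^i))
            * ((n:ℝ) * Real.exp ((Real.exp t - 1) * q^k)) := by
          apply mul_le_mul_of_nonneg_left _ (by positivity)
          exact mul_le_mul_of_nonneg_left hmul_exp hn0.le
      _ = (n:ℝ)^(k+1) * Real.exp ((Real.exp t - 1) * ∑ i ∈ Finset.range (k+1), q^i) := by
          rw [Finset.sum_range_succ, mul_add, Real.exp_add]
          ring

lemma geom_eq (n : ℕ) (hn : 1 ≤ n) :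
    ∑ i ∈ Finset.range n, (((n:ℝ)-1)/n)^i = (n:ℝ) * (1 - (((n:ℝ)-1)/n)^n) := by
  have hn0 : (0:ℝ) < n := by exact_mod_cast hn
  set q : ℝ := ((n:ℝ)-1)/n with hqdef
  have h1q : 1 - q = 1/n := by
    rw [hqdef]
    field_simp
    ring
  have := geom_sum_mul (x := q) (n := n)
  -- (∑ i in range n, q ^ i) * (q - 1) = q ^ n - 1
  have h2 : (∑ i ∈ Finset.range n, q^i) * (1/(n:ℝ)) = 1 - q^n := by
    have : (∑ i ∈ Finset.range n, q^i) * (1 - q) = 1 - q^n := by linarith [this]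
    rwa [h1q] at this
  field_simp at h2
  linarith

lemma qpow_le (n : ℕ) (hn : 1 ≤ n) : (((n:ℝ)-1)/n)^n ≤ 1/Real.exp 1 := by
  have hn0 : (0:ℝ) < n := by exact_mod_cast hn
  have hq0 : (0:ℝ) ≤ ((n:ℝ)-1)/n := by
    apply div_nonneg _ hn0.le
    have : (1:ℝ) ≤ n := by exact_mod_cast hn
    linarith
  have h1 : ((n:ℝ)-1)/n ≤ Real.exp (-(1/n)) := by
    have := Real.add_one_le_exp (-(1/(n:ℝ)))
    have h2 : ((n:ℝ)-1)/n = -(1/n) + 1 := by field_simp; ring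
    linarith
  calc (((n:ℝ)-1)/n)^n ≤ (Real.exp (-(1/n)))^n := pow_le_pow_left₀ hq0 h1 n
    _ = Real.exp ((n:ℕ) * (-(1/n))) := by rw [← Real.exp_nat_mul]
    _ = Real.exp (-1) := by
        congr 1
        field_simp
    _ = 1/Real.exp 1 := by rw [Real.exp_neg]; ring

lemma qpow_ge_aux (m : ℕ) : 1/Real.exp 1 ≤ ((m:ℝ)/(m+1))^m := by
  rcases Nat.eq_zero_or_pos m with h | h
  · subst h
    simp only [Nat.cast_zero, pow_zero]
    rw [div_le_one (Real.exp_pos 1)]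
    linarith [Real.add_one_le_exp (1:ℝ)]
  · have hm0 : (0:ℝ) < m := by exact_mod_cast h
    have hq : (0:ℝ) < (m:ℝ)/(m+1) := by positivity
    have hinv : (((m:ℝ)+1)/m)^m ≤ Real.exp 1 := by
      have h1 : ((m:ℝ)+1)/m ≤ Real.exp (1/m) := by
        have := Real.add_one_le_exp (1/(m:ℝ))
        have h2 : ((m:ℝ)+1)/m = 1/m + 1 := by field_simp; ring
        linarith
      calc (((m:ℝ)+1)/m)^m ≤ (Real.exp (1/m))^m := pow_le_pow_left₀ (by positivity) h1 m
        _ = Real.exp ((m:ℕ) * (1/m)) := by rw [← Real.exp_nat_mul]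
        _ = Real.exp 1 := by congr 1; field_simp
    have hinvq : ((m:ℝ)/(m+1))^m = ((((m:ℝ)+1)/m)^m)⁻¹ := by
      rw [← inv_pow, inv_div]
    rw [hinvq, ← one_div]
    exact one_div_le_one_div_of_le (by positivity) hinv

lemma qpow_ge (n : ℕ) (hn : 1 ≤ n) :
    (1/Real.exp 1) * (((n:ℝ)-1)/n) ≤ (((n:ℝ)-1)/n)^n := by
  obtain ⟨m, rfl⟩ := Nat.exists_eq_add_of_le hn
  have hq : ((((1+m):ℕ):ℝ)-1)/((1+m):ℕ) = (m:ℝ)/(m+1) := by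
    push_cast
    ring_nf
  rw [hq]
  have : ((m:ℝ)/(m+1))^(1+m) = ((m:ℝ)/(m+1))^m * ((m:ℝ)/(m+1)) := by
    rw [pow_add]
    ring
  rw [this]
  apply mul_le_mul_of_nonneg_right (qpow_ge_aux m) (by positivity)

lemma exp_quad (x : ℝ) (hx : |x| ≤ 1) : Real.exp x ≤ 1 + x + x^2 := by
  have := Real.exp_bound hx (n := 2) (by norm_num)
  have h2 : ∑ i ∈ Finset.range 2, x ^ i / (Nat.factorial i : ℝ) = 1 + x := by
    simp [Finset.sum_range_succ, Nat.factorial]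
  rw [h2] at this
  have h6 := (abs_le.1 this).2
  rw [sq_abs] at h6
  norm_num [Nat.factorial] at h6
  nlinarith [sq_nonneg x, h6]

lemma sum_cnt_exp (n : ℕ) (t : ℝ) :
    ∑ j ∈ Finset.range (n+1), (cnt n n j : ℝ) * Real.exp (t * j) = S n n t := by
  classical
  have hmaps : ∀ f : Fin n → Fin n, f ∈ (Finset.univ : Finset (Fin n → Fin n)) →
      Dm f ∈ Finset.range (n+1) := by
    intro f _
    rw [Finset.mem_range]
    exact Nat.lt_succ_of_le (Dm_le_n f)
  have := Finset.sum_fiberwise_of_maps_to hmaps (fun f => Real.exp (t * Dm f))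
  rw [S, ← this]
  refine Finset.sum_congr rfl (fun j _ => ?_)
  have hinner : ∀ f ∈ (Finset.univ : Finset (Fin n → Fin n)).filter (fun f => Dm f = j),
      Real.exp (t * Dm f) = Real.exp (t * j) := by
    intro f hf
    rw [(Finset.mem_filter.1 hf).2]
  rw [Finset.sum_congr rfl hinner, Finset.sum_const, nsmul_eq_mul]
  rfl

lemma filter_subset_range (n : ℕ) (p : ℕ → Prop) [DecidablePred p] :
    (Finset.Icc 1 n).filter p ⊆ Finset.range (n+1) := by
  intro j hj
  rw [Finset.mem_range]
  have := (Finset.mem_Icc.1 (Finset.mem_filter.1 hj).1).2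
  omega

lemma tail_upper (n : ℕ) (t θ : ℝ) (ht : 0 ≤ t) :
    ∑ j ∈ (Finset.Icc 1 n).filter (fun j : ℕ => θ * n ≤ (j:ℝ)), (cnt n n j : ℝ)
      ≤ Real.exp (-(t * θ * n)) * S n n t := by
  classical
  calc ∑ j ∈ (Finset.Icc 1 n).filter (fun j : ℕ => θ * n ≤ (j:ℝ)), (cnt n n j : ℝ)
      ≤ ∑ j ∈ (Finset.Icc 1 n).filter (fun j : ℕ => θ * n ≤ (j:ℝ)),
          Real.exp (-(t * θ * n)) * ((cnt n n j : ℝ) * Real.exp (t * j)) := by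
        refine Finset.sum_le_sum (fun j hj => ?_)
        have hθ : θ * n ≤ (j:ℝ) := by
          have := (Finset.mem_filter.1 hj).2
          simpa using this
        have h1 : (1:ℝ) ≤ Real.exp (-(t * θ * n)) * Real.exp (t * j) := by
          rw [← Real.exp_add]
          have : (0:ℝ) ≤ -(t * θ * n) + t * j := by nlinarith
          calc (1:ℝ) = Real.exp 0 := by rw [Real.exp_zero]
            _ ≤ _ := Real.exp_le_exp.2 this
        nlinarith [Nat.cast_nonneg (α := ℝ) (cnt n n j), h1]
    _ = Real.exp (-(t * θ * n)) *
          ∑ j ∈ (Finset.Icc 1 n).filter (fun j : ℕ => θ * n ≤ (j:ℝ)), (cnt n n j : ℝ) * Real.exp (t * j) := by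
        rw [Finset.mul_sum]
    _ ≤ Real.exp (-(t * θ * n)) * ∑ j ∈ Finset.range (n+1), (cnt n n j : ℝ) * Real.exp (t * j) := by
        apply mul_le_mul_of_nonneg_left _ (Real.exp_pos _).le
        apply Finset.sum_le_sum_of_subset_of_nonneg (filter_subset_range n _)
        intro j _ _
        positivity
    _ = Real.exp (-(t * θ * n)) * S n n t := by rw [sum_cnt_exp]

lemma tail_lower (n : ℕ) (s θ : ℝ) (hs : 0 ≤ s) :
    ∑ j ∈ (Finset.Icc 1 n).filter (fun j : ℕ => (j:ℝ) ≤ θ * n), (cnt n n j : ℝ)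
      ≤ Real.exp (s * θ * n) * S n n (-s) := by
  classical
  calc ∑ j ∈ (Finset.Icc 1 n).filter (fun j : ℕ => (j:ℝ) ≤ θ * n), (cnt n n j : ℝ)
      ≤ ∑ j ∈ (Finset.Icc 1 n).filter (fun j : ℕ => (j:ℝ) ≤ θ * n),
          Real.exp (s * θ * n) * ((cnt n n j : ℝ) * Real.exp (-s * j)) := by
        refine Finset.sum_le_sum (fun j hj => ?_)
        have hθ : (j:ℝ) ≤ θ * n := by
          have := (Finset.mem_filter.1 hj).2
          simpa using this
        have h1 : (1:ℝ) ≤ Real.exp (s * θ * n) * Real.exp (-s * j) := by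
          rw [← Real.exp_add]
          have : (0:ℝ) ≤ s * θ * n + (-s) * j := by nlinarith
          calc (1:ℝ) = Real.exp 0 := by rw [Real.exp_zero]
            _ ≤ _ := Real.exp_le_exp.2 this
        nlinarith [Nat.cast_nonneg (α := ℝ) (cnt n n j), h1]
    _ = Real.exp (s * θ * n) *
          ∑ j ∈ (Finset.Icc 1 n).filter (fun j : ℕ => (j:ℝ) ≤ θ * n), (cnt n n j : ℝ) * Real.exp (-s * j) := by
        rw [Finset.mul_sum]
    _ ≤ Real.exp (s * θ * n) * ∑ j ∈ Finset.range (n+1), (cnt n n j : ℝ) * Real.exp (-s * j) := by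
        apply mul_le_mul_of_nonneg_left _ (Real.exp_pos _).le
        apply Finset.sum_le_sum_of_subset_of_nonneg (filter_subset_range n _)
        intro j _ _
        positivity
    _ = Real.exp (s * θ * n) * S n n (-s) := by
        rw [← sum_cnt_exp]

end Stmt3Aux

lemma a_eq_cnt (n j : ℕ) : a n j = (Stmt3Aux.cnt n n j : ℝ) := by
  rw [Stmt3Aux.cnt_eq, a, stirling2, Stmt3Aux.sur]
  have hj : (Nat.factorial j : ℝ) ≠ 0 := Nat.cast_ne_zero.2 (Nat.factorial_ne_zero j)
  field_simp

set_option maxHeartbeats 2000000 in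
theorem stmt_3 (ε : ℝ) (hε0 : 0 < ε) (hε1 : ε < 1) :
    Summable (fun n : ℕ => (n : ℝ) ^ (-(n : ℝ)) *
      ((∑ j ∈ (Finset.Icc 1 n).filter
          (fun j : ℕ => (j : ℝ) ≤ (1 - 1 / Real.exp 1 - ε) * n), a n j) +
       (∑ j ∈ (Finset.Icc 1 n).filter
          (fun j : ℕ => (1 - 1 / Real.exp 1 + ε) * n ≤ (j : ℝ)), a n j))) := by
  classical
  set μ : ℝ := 1 - 1 / Real.exp 1 with hμ
  clear_value μ
  have hexp1 : (1:ℝ) < Real.exp 1 := by linarith [Real.add_one_le_exp (1:ℝ)]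
  have hexp0 : (0:ℝ) < Real.exp 1 := Real.exp_pos 1
  have hinv1 : 0 < 1 / Real.exp 1 := by positivity
  have hinv2 : 1 / Real.exp 1 < 1 := by rw [div_lt_one hexp0]; exact hexp1
  have hμ0 : 0 < μ := by rw [hμ]; linarith
  have hμ1 : μ < 1 := by rw [hμ]; linarith
  set t : ℝ := ε / 2 with ht
  clear_value t
  have ht0 : 0 < t := by rw [ht]; linarith
  have ht1 : t < 1/2 := by rw [ht]; linarith
  set r : ℝ := Real.exp (-(ε^2/4)) with hr
  clear_value r
  have hr0 : (0:ℝ) ≤ r := by rw [hr]; exact (Real.exp_pos _).le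
  have hr1 : r < 1 := by
    rw [hr, Real.exp_lt_one_iff]
    nlinarith
  have hgsum : Summable (fun n : ℕ => (1 + Real.exp 1) * r ^ n) :=
    (summable_geometric_of_lt_one hr0 hr1).mul_left _
  apply Summable.of_nonneg_of_le _ _ hgsum
  · intro n
    apply mul_nonneg (Real.rpow_nonneg (Nat.cast_nonneg n) _)
    apply add_nonneg <;>
      · apply Finset.sum_nonneg
        intro j hj
        rw [a_eq_cnt]
        positivity
  · intro n
    rcases Nat.eq_zero_or_pos n with h0 | hn
    · subst h0
      simp only [Finset.Icc_self, Nat.cast_zero]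
      rw [show (Finset.Icc 1 0) = (∅ : Finset ℕ) by rfl]
      simp only [Finset.filter_empty, Finset.sum_empty, add_zero, mul_zero, pow_zero, mul_one]
      positivity
    · have hn0 : (0:ℝ) < n := by exact_mod_cast hn
      set q : ℝ := ((n:ℝ)-1)/n with hqdef
      clear_value q
      have hqle : q^n ≤ 1/Real.exp 1 := by rw [hqdef]; exact Stmt3Aux.qpow_le n hn
      have hqge : (1/Real.exp 1) * q ≤ q^n := by rw [hqdef]; exact Stmt3Aux.qpow_ge n hn
      have hS : ∀ u : ℝ, Stmt3Aux.S n n u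
          ≤ (n:ℝ)^n * Real.exp ((Real.exp u - 1) * ((n:ℝ) * (1 - q^n))) := by
        intro u
        have h1 := Stmt3Aux.S_le n hn u n
        rw [Stmt3Aux.geom_eq n hn] at h1
        rw [hqdef]
        exact h1
      -- exp quadratic bounds
      have habs : |(-t)| ≤ 1 := by rw [abs_neg, abs_of_pos ht0]; linarith
      have habs2 : |t| ≤ 1 := by rw [abs_of_pos ht0]; linarith
      have hequad1 := Stmt3Aux.exp_quad (-t) habs
      have hequad2 := Stmt3Aux.exp_quad t habs2
      have hexpt1 : 1 + t ≤ Real.exp t := by linarith [Real.add_one_le_exp t]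
      have hexpt2 : Real.exp (-t) ≤ 1 := by
        rw [Real.exp_le_one_iff]  -- check name
        linarith
      -- lower tail
      have hL : ∑ j ∈ (Finset.Icc 1 n).filter (fun j : ℕ => (j:ℝ) ≤ (μ - ε) * n), a n j
          ≤ (n:ℝ)^n * Real.exp (-(ε^2/4) * n) := by
        have h1 := Stmt3Aux.tail_lower n t (μ - ε) ht0.le
        have h2 := hS (-t)
        have h3 : ∑ j ∈ (Finset.Icc 1 n).filter (fun j : ℕ => (j:ℝ) ≤ (μ - ε) * n), a n j
            = ∑ j ∈ (Finset.Icc 1 n).filter (fun j : ℕ => (j:ℝ) ≤ (μ - ε) * n),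
                (Stmt3Aux.cnt n n j : ℝ) :=
          Finset.sum_congr rfl (fun j _ => a_eq_cnt n j)
        rw [h3]
        calc ∑ j ∈ (Finset.Icc 1 n).filter (fun j : ℕ => (j:ℝ) ≤ (μ - ε) * n),
              (Stmt3Aux.cnt n n j : ℝ)
            ≤ Real.exp (t * (μ - ε) * n) * Stmt3Aux.S n n (-t) := h1
          _ ≤ Real.exp (t * (μ - ε) * n)
                * ((n:ℝ)^n * Real.exp ((Real.exp (-t) - 1) * ((n:ℝ) * (1 - q^n)))) := by
              exact mul_le_mul_of_nonneg_left h2 (Real.exp_pos _).le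
          _ = (n:ℝ)^n * Real.exp (t * (μ - ε) * n + (Real.exp (-t) - 1) * ((n:ℝ) * (1 - q^n))) := by
              rw [Real.exp_add]; ring
          _ ≤ (n:ℝ)^n * Real.exp (-(ε^2/4) * n) := by
              apply mul_le_mul_of_nonneg_left _ (by positivity)
              apply Real.exp_le_exp.2
              -- key exponent inequality
              have hfac : Real.exp (-t) - 1 ≤ 0 := by linarith
              have hnp : μ * n ≤ (n:ℝ) * (1 - q^n) := by
                have h7 : μ ≤ 1 - q^n := by rw [hμ]; linarith
                have := mul_le_mul_of_nonneg_left h7 hn0.le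
                linarith [this]
              have e1 : (Real.exp (-t) - 1) * ((n:ℝ) * (1 - q^n))
                  ≤ (Real.exp (-t) - 1) * (μ * n) :=
                mul_le_mul_of_nonpos_left hnp hfac
              have h4 : t * (μ - ε) + (Real.exp (-t) - 1) * μ ≤ -(ε^2/4) := by
                have hA : (Real.exp (-t) - 1) * μ ≤ (t^2 - t) * μ := by
                  have : Real.exp (-t) - 1 ≤ t^2 - t := by linarith [hequad1]
                  exact mul_le_mul_of_nonneg_right this hμ0.le
                have hC : t^2 * μ ≤ t^2 := by
                  have := sq_nonneg t
                  nlinarith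
                have hD : t^2 - t*ε = -(ε^2/4) := by rw [ht]; ring
                nlinarith [hA, hC]
              have e2 : t * (μ - ε) * n + (Real.exp (-t) - 1) * (μ * n) ≤ -(ε^2/4) * n := by
                have := mul_le_mul_of_nonneg_right h4 hn0.le
                nlinarith [this]
              linarith
      -- upper tail
      have hU : ∑ j ∈ (Finset.Icc 1 n).filter (fun j : ℕ => (μ + ε) * n ≤ (j:ℝ)), a n j
          ≤ (n:ℝ)^n * (Real.exp 1 * Real.exp (-(ε^2/4) * n)) := by
        have h1 := Stmt3Aux.tail_upper n t (μ + ε) ht0.le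
        have h2 := hS t
        have h3 : ∑ j ∈ (Finset.Icc 1 n).filter (fun j : ℕ => (μ + ε) * n ≤ (j:ℝ)), a n j
            = ∑ j ∈ (Finset.Icc 1 n).filter (fun j : ℕ => (μ + ε) * n ≤ (j:ℝ)),
                (Stmt3Aux.cnt n n j : ℝ) :=
          Finset.sum_congr rfl (fun j _ => a_eq_cnt n j)
        rw [h3]
        calc ∑ j ∈ (Finset.Icc 1 n).filter (fun j : ℕ => (μ + ε) * n ≤ (j:ℝ)),
              (Stmt3Aux.cnt n n j : ℝ)
            ≤ Real.exp (-(t * (μ + ε) * n)) * Stmt3Aux.S n n t := h1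
          _ ≤ Real.exp (-(t * (μ + ε) * n))
                * ((n:ℝ)^n * Real.exp ((Real.exp t - 1) * ((n:ℝ) * (1 - q^n)))) := by
              exact mul_le_mul_of_nonneg_left h2 (Real.exp_pos _).le
          _ = (n:ℝ)^n * Real.exp (-(t * (μ + ε) * n) + (Real.exp t - 1) * ((n:ℝ) * (1 - q^n))) := by
              rw [Real.exp_add]; ring
          _ ≤ (n:ℝ)^n * (Real.exp 1 * Real.exp (-(ε^2/4) * n)) := by
              rw [← Real.exp_add]
              apply mul_le_mul_of_nonneg_left _ (by positivity)
              apply Real.exp_le_exp.2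
              have hfac : 0 ≤ Real.exp t - 1 := by linarith
              have hnp : (n:ℝ) * (1 - q^n) ≤ μ * n + 1 := by
                have h5 : (1/Real.exp 1) * ((n:ℝ) - 1) ≤ q^n * (n:ℝ) := by
                  have hh : (1/Real.exp 1) * q * n ≤ q^n * n :=
                    mul_le_mul_of_nonneg_right hqge hn0.le
                  have hq' : q * (n:ℝ) = (n:ℝ) - 1 := by
                    rw [hqdef]
                    field_simp
                  calc (1/Real.exp 1) * ((n:ℝ) - 1) = (1/Real.exp 1) * q * n := by
                        rw [← hq']; ring
                    _ ≤ q^n * n := hh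
                  done
                have hexpand : (1/Real.exp 1) * ((n:ℝ) - 1)
                    = (1/Real.exp 1) * n - 1/Real.exp 1 := by ring
                have hμn : μ * (n:ℝ) = (n:ℝ) - (1/Real.exp 1) * n := by rw [hμ]; ring
                have hgeq : (n:ℝ) * (1 - q^n) = (n:ℝ) - q^n * n := by ring
                rw [hgeq, hμn]
                linarith [h5, hexpand, hinv2]
              have e1 : (Real.exp t - 1) * ((n:ℝ) * (1 - q^n))
                  ≤ (Real.exp t - 1) * (μ * n + 1) :=
                mul_le_mul_of_nonneg_left hnp hfac
              have e2 : -(t * (μ + ε) * n) + (Real.exp t - 1) * (μ * n + 1)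
                  ≤ 1 + -(ε^2/4) * n := by
                have h4 : Real.exp t - 1 ≤ t + t^2 := by linarith
                have hμnpos : (0:ℝ) ≤ μ * n := by positivity
                have h5 : (Real.exp t - 1) * (μ * n) ≤ (t + t^2) * (μ * n) :=
                  mul_le_mul_of_nonneg_right h4 hμnpos
                have h6 : Real.exp t - 1 ≤ 1 := by nlinarith [h4, ht0, ht1]
                have hkey : -(t * (μ + ε) * n) + (t + t^2) * (μ * n) ≤ -(ε^2/4) * n := by
                  have hper : -(t * (μ + ε)) + (t + t^2) * μ ≤ -(ε^2/4) := by
                    have hC : t^2 * μ ≤ t^2 := by nlinarith [sq_nonneg t]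
                    have hD : t^2 - t*ε = -(ε^2/4) := by rw [ht]; ring
                    nlinarith [hC]
                  have := mul_le_mul_of_nonneg_right hper hn0.le
                  nlinarith [this]
                have hsplit : (Real.exp t - 1) * (μ * n + 1)
                    = (Real.exp t - 1) * (μ * n) + (Real.exp t - 1) := by ring
                linarith [hsplit, h5, h6, hkey]
              linarith
      -- combine
      have hpow : (n:ℝ)^(-(n:ℝ)) * (n:ℝ)^n = 1 := by
        rw [Real.rpow_neg hn0.le, ← Real.rpow_natCast (n:ℝ) n]
        exact inv_mul_cancel₀ (Real.rpow_pos_of_pos hn0 _).ne'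
      have hrn : Real.exp (-(ε^2/4) * n) = r^n := by
        rw [hr, ← Real.exp_nat_mul]
        congr 1
        ring
      have hfinal : (n:ℝ)^(-(n:ℝ)) *
          ((∑ j ∈ (Finset.Icc 1 n).filter (fun j : ℕ => (j:ℝ) ≤ (μ - ε) * n), a n j) +
           (∑ j ∈ (Finset.Icc 1 n).filter (fun j : ℕ => (μ + ε) * n ≤ (j:ℝ)), a n j))
          ≤ (1 + Real.exp 1) * r^n := by
        have hsum : (∑ j ∈ (Finset.Icc 1 n).filter (fun j : ℕ => (j:ℝ) ≤ (μ - ε) * n), a n j) +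
            (∑ j ∈ (Finset.Icc 1 n).filter (fun j : ℕ => (μ + ε) * n ≤ (j:ℝ)), a n j)
            ≤ (n:ℝ)^n * ((1 + Real.exp 1) * Real.exp (-(ε^2/4) * n)) := by
          have := add_le_add hL hU
          nlinarith [this]
        have hnn : (0:ℝ) ≤ (n:ℝ)^(-(n:ℝ)) := Real.rpow_nonneg (Nat.cast_nonneg n) _
        calc (n:ℝ)^(-(n:ℝ)) * _ ≤ (n:ℝ)^(-(n:ℝ)) *
              ((n:ℝ)^n * ((1 + Real.exp 1) * Real.exp (-(ε^2/4) * n))) :=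
            mul_le_mul_of_nonneg_left hsum hnn
          _ = ((n:ℝ)^(-(n:ℝ)) * (n:ℝ)^n) * ((1 + Real.exp 1) * Real.exp (-(ε^2/4) * n)) := by ring
          _ = (1 + Real.exp 1) * r^n := by rw [hpow, hrn, one_mul]
      exact hfinal
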